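/- Let Φ*(x) = ∫ℝ log|λ − x| ρ_sc(dλ). Then for every x with |x| > 2, Φ*(x) = x²/4 − 1/2 − (|x|/4)√(x² − 4) + log((|x| + √(x² − 4))/2). -/

import Mathlib

open MeasureTheory Real
open intervalIntegral Filter Topology Set
open scoped ENNReal NNReal

/-- The semicircle distribution on `[-2, 2]`, with density `(1/(2π))√(4 - λ²)`. -/
noncomputable def semicircle : Measure ℝ :=
  volume.withDensity fun l => ENNReal.ofReal ((1 / (2 * π)) * Real.sqrt (4 - l ^ 2))

lemma s_sq {x : ℝ} (hx : 2 < x) : Real.sqrt (x^2-4) ^ 2 = x^2 - 4 := by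
  rw [Real.sq_sqrt]; nlinarith

lemma s_pos {x : ℝ} (hx : 2 < x) : 0 < Real.sqrt (x^2-4) := by
  apply Real.sqrt_pos.2; nlinarith

lemma s_lt {x : ℝ} (hx : 2 < x) : Real.sqrt (x^2-4) < x := by
  nlinarith [s_sq hx, s_pos hx]

lemma s_le {x : ℝ} (hx : 2 < x) : Real.sqrt (x^2-4) ≤ x := (s_lt hx).le

lemma sub_le_s {x : ℝ} (hx : 2 < x) : x - 2 ≤ Real.sqrt (x^2-4) := by
  nlinarith [s_sq hx, s_pos hx]

lemma stieltjes {x : ℝ} (hx : 2 < x) :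
    ∫ l in (-2:ℝ)..2, Real.sqrt (4 - l^2) / (x - l) = π * (x - Real.sqrt (x^2-4)) := by
  have hs2 := s_sq hx
  have hsp := s_pos hx
  set s := Real.sqrt (x^2-4) with hs
  set G : ℝ → ℝ := fun l => s * Real.arcsin ((4 - x*l)/(2*(x-l))) + x * Real.arcsin (l/2)
      - Real.sqrt (4 - l^2) with hG
  have key : ∫ l in (-2:ℝ)..2, Real.sqrt (4 - l^2) / (x - l) = G 2 - G (-2) := by
    apply intervalIntegral.integral_eq_sub_of_hasDeriv_right_of_le (by norm_num)
    · apply ContinuousOn.sub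
      apply ContinuousOn.add
      · apply continuousOn_const.mul
        apply Real.continuous_arcsin.comp_continuousOn
        apply ContinuousOn.div (by fun_prop) (by fun_prop)
        intro l hl
        have : l ≤ 2 := hl.2
        intro h; nlinarith [hl.1]
      · exact continuousOn_const.mul (Real.continuous_arcsin.comp_continuousOn (by fun_prop))
      · fun_prop
    · intro l hl
      apply HasDerivAt.hasDerivWithinAt
      have hq : 0 < Real.sqrt (4 - l^2) := Real.sqrt_pos.2 (by nlinarith [hl.1, hl.2])
      set q := Real.sqrt (4 - l^2) with hqdef
      have hq2 : q^2 = 4 - l^2 := Real.sq_sqrt (by nlinarith [hl.1, hl.2])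
      have hd : 0 < x - l := by linarith [hl.2]
      have hu : HasDerivAt (fun l : ℝ => (4 - x*l)/(2*(x-l)))
          (((-x) * (2*(x-l)) - (4 - x*l) * (-2)) / (2*(x-l))^2) l := by
        apply HasDerivAt.div
        · simpa using ((hasDerivAt_id l).const_mul x).const_sub 4
        · simpa using ((hasDerivAt_id l).const_sub x).const_mul 2
        · positivity
      have hu2 : 1 - ((4 - x*l)/(2*(x-l)))^2 = (q*s/(2*(x-l)))^2 := by
        field_simp
        nlinarith [hq2, hs2]
      have hpos : 0 < (q*s/(2*(x-l)))^2 := by positivity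
      have hune : ((4 - x*l)/(2*(x-l))) ≠ -1 ∧ ((4 - x*l)/(2*(x-l))) ≠ 1 := by
        constructor <;> intro h <;> rw [h] at hu2 <;> norm_num at hu2 <;> linarith [hpos]
      have harc1 : HasDerivAt (fun l : ℝ => Real.arcsin ((4 - x*l)/(2*(x-l))))
          (1 / Real.sqrt (1 - ((4 - x*l)/(2*(x-l)))^2) * (((-x) * (2*(x-l)) - (4 - x*l) * (-2)) / (2*(x-l))^2)) l :=
        HasDerivAt.comp (h₂ := Real.arcsin) l (Real.hasDerivAt_arcsin hune.1 hune.2) hu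
      have harc2 : HasDerivAt (fun l : ℝ => Real.arcsin (l/2))
          (1 / Real.sqrt (1 - (l/2)^2) * (1/2)) l := by
        have h2 : l/2 ≠ -1 := by intro h; have := hl.1; simp only [Set.mem_Ioo] at hl; linarith [hl.1, (by linarith : l = -2)]
        have h2' : l/2 ≠ 1 := by intro h; have := hl.2; linarith [(by linarith : l = 2)]
        exact (Real.hasDerivAt_arcsin h2 h2').comp l ((hasDerivAt_id l).div_const 2)
      have hsqrt : HasDerivAt (fun l : ℝ => Real.sqrt (4 - l^2)) (1 / (2 * q) * (-(2*l))) l := by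
        have h1 : HasDerivAt (fun l : ℝ => 4 - l^2) (-(2*l)) l := by
          simpa using ((hasDerivAt_pow 2 l).const_sub 4)
        exact (Real.hasDerivAt_sqrt (by nlinarith [hl.1, hl.2])).comp l h1
      have hA : HasDerivAt G
          (s * (1 / Real.sqrt (1 - ((4 - x*l)/(2*(x-l)))^2) * (((-x) * (2*(x-l)) - (4 - x*l) * (-2)) / (2*(x-l))^2))
           + x * (1 / Real.sqrt (1 - (l/2)^2) * (1/2)) - (1 / (2 * q) * (-(2*l)))) l :=
        ((harc1.const_mul s).add (harc2.const_mul x)).sub hsqrt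
      have hrw1 : Real.sqrt (1 - ((4 - x*l)/(2*(x-l)))^2) = q*s/(2*(x-l)) := by
        rw [hu2, Real.sqrt_sq (by positivity)]
      have hrw2 : Real.sqrt (1 - (l/2)^2) = q/2 := by
        rw [show (1 : ℝ) - (l/2)^2 = (q/2)^2 by rw [div_pow]; nlinarith [hq2],
          Real.sqrt_sq (by positivity)]
      refine hA.congr_deriv (Eq.symm ?_)
      rw [hrw1, hrw2]
      have hdd : x - l ≠ 0 := ne_of_gt hd
      field_simp
      linear_combination hq2
    · apply ContinuousOn.intervalIntegrable
      apply ContinuousOn.div (by fun_prop) (by fun_prop)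
      intro l hl
      rw [Set.uIcc_of_le (by norm_num : (-2:ℝ) ≤ 2)] at hl
      intro h; nlinarith [hl.1, hl.2]
  rw [key]
  have h2 : (4 - x*2)/(2*(x-2)) = -1 := by
    rw [div_eq_iff (by intro h; nlinarith : (2*(x-2)) ≠ 0)]; ring
  have h2' : (4 - x*(-2))/(2*(x-(-2))) = 1 := by
    rw [div_eq_iff (by intro h; nlinarith : (2*(x-(-2))) ≠ 0)]; ring
  simp only [hG, h2, h2', Real.arcsin_neg, Real.arcsin_one]
  norm_num [Real.arcsin_one]
  ring

lemma sqrt_le_two {t : ℝ} : Real.sqrt (4 - t^2) ≤ 2 := by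
  rw [show (2:ℝ) = Real.sqrt 4 by rw [show (4:ℝ) = 2^2 by norm_num, Real.sqrt_sq]; norm_num]
  apply Real.sqrt_le_sqrt; nlinarith [sq_nonneg t]

lemma phi_hasDeriv {x : ℝ} (hx : 2 < x) :
    HasDerivAt (fun y => ∫ l in (-2:ℝ)..2, Real.log (y - l) * Real.sqrt (4 - l^2))
      (π * (x - Real.sqrt (x^2-4))) x := by
  have hε : (0:ℝ) < (x-2)/2 := by linarith
  have hball : ∀ y ∈ Metric.ball x ((x-2)/2), ∀ t ∈ Set.uIoc (-2:ℝ) 2, (x-2)/2 < y - t := by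
    intro y hy t ht
    rw [Set.uIoc_of_le (by norm_num : (-2:ℝ) ≤ 2)] at ht
    have := abs_lt.1 (mem_ball_iff_norm.1 hy)
    have ht2 := ht.2
    linarith [this.1]
  have main := (intervalIntegral.hasDerivAt_integral_of_dominated_loc_of_deriv_le
    (F := fun y t => Real.log (y - t) * Real.sqrt (4 - t^2))
    (F' := fun y t => Real.sqrt (4 - t^2) / (y - t))
    (x₀ := x) (a := (-2:ℝ)) (b := 2) (μ := volume)
    (bound := fun _ => 2 / ((x-2)/2) ) (Metric.ball_mem_nhds x hε) ?_ ?_ ?_ ?_ ?_ ?_).2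
  · rw [stieltjes hx] at main; exact main
  · filter_upwards with y
    apply Measurable.aestronglyMeasurable
    exact (Real.measurable_log.comp (measurable_const.sub measurable_id)).mul
      (Real.continuous_sqrt.comp (by continuity)).measurable
  · apply ContinuousOn.intervalIntegrable
    apply ContinuousOn.mul
    · apply ContinuousOn.log (by fun_prop)
      intro t ht
      rw [Set.uIcc_of_le (by norm_num : (-2:ℝ) ≤ 2)] at ht
      have := ht.2; intro h; linarith [(by linarith : t = x)]
    · fun_prop
  · apply Measurable.aestronglyMeasurable
    exact (Real.continuous_sqrt.comp (by continuity)).measurable.div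
      (measurable_const.sub measurable_id)
  · filter_upwards with t ht y hy
    have h1 := hball y hy t ht
    have h2 : 0 < y - t := lt_trans hε h1
    rw [Real.norm_eq_abs, abs_of_nonneg (by positivity)]
    calc Real.sqrt (4 - t^2) / (y - t) ≤ 2 / (y - t) := by
          gcongr; exact sqrt_le_two
      _ ≤ 2 / ((x-2)/2) := by gcongr
  · exact intervalIntegrable_const
  · filter_upwards with t ht y hy
    have h2 : 0 < y - t := lt_trans hε (hball y hy t ht)
    have hlog : HasDerivAt (fun y : ℝ => Real.log (y - t)) (1/(y-t)) y := by
      have : HasDerivAt (fun y : ℝ => y - t) 1 y := by simpa using (hasDerivAt_id y).sub_const t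
      refine ((Real.hasDerivAt_log (ne_of_gt h2)).comp y this).congr_deriv ?_
      ring
    have := hlog.mul_const (Real.sqrt (4 - t^2))
    refine this.congr_deriv (Eq.symm ?_)
    ring

noncomputable def rhsFun (x : ℝ) : ℝ :=
  x^2/4 - 1/2 - (x/4)*Real.sqrt (x^2-4) + Real.log ((x + Real.sqrt (x^2-4))/2)

lemma rhs_hasDeriv {x : ℝ} (hx : 2 < x) :
    HasDerivAt rhsFun ((x - Real.sqrt (x^2-4))/2) x := by
  have hs2 := s_sq hx
  have hsp := s_pos hx
  set s := Real.sqrt (x^2-4) with hs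
  have hxs : 0 < x + s := by linarith
  have hsd : HasDerivAt (fun y : ℝ => Real.sqrt (y^2-4)) (1 / (2*s) * (2*x)) x := by
    have h1 : HasDerivAt (fun y : ℝ => y^2 - 4) (2*x) x := by
      simpa using (hasDerivAt_pow 2 x).sub_const 4
    exact (Real.hasDerivAt_sqrt (by nlinarith)).comp x h1
  have h1 : HasDerivAt (fun y : ℝ => y^2/4) ((2*x)/4) x := by
    simpa using (hasDerivAt_pow 2 x).div_const 4
  have h2 : HasDerivAt (fun y : ℝ => (y/4)*Real.sqrt (y^2-4))
      ((1/4)*s + (x/4)*(1 / (2*s) * (2*x))) x := by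
    have := ((hasDerivAt_id x).div_const 4).mul hsd
    exact this
  have h3 : HasDerivAt (fun y : ℝ => Real.log ((y + Real.sqrt (y^2-4))/2))
      (((x + s)/2)⁻¹ * ((1 + 1 / (2*s) * (2*x))/2)) x := by
    have hin : HasDerivAt (fun y : ℝ => (y + Real.sqrt (y^2-4))/2)
        ((1 + 1 / (2*s) * (2*x))/2) x := ((hasDerivAt_id x).add hsd).div_const 2
    have := (Real.hasDerivAt_log (by positivity : ((x+s)/2) ≠ 0)).comp x hin
    exact this
  have hAll := ((h1.sub_const (1/2)).sub h2).add h3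
  refine hAll.congr_deriv (Eq.symm ?_)
  have h4 : ((x+s)/2)⁻¹ * ((1 + 1/(2*s)*(2*x))/2) = 1/s := by
    rw [inv_div]
    field_simp
    ring
  rw [h4]
  field_simp
  linear_combination -2*hs2

lemma integral_sqrt_semi : ∫ l in (-2:ℝ)..2, Real.sqrt (4 - l^2) = 2*π := by
  set H : ℝ → ℝ := fun l => l * Real.sqrt (4 - l^2) / 2 + 2 * Real.arcsin (l/2) with hH
  have key : ∫ l in (-2:ℝ)..2, Real.sqrt (4 - l^2) = H 2 - H (-2) := by
    apply intervalIntegral.integral_eq_sub_of_hasDeriv_right_of_le (by norm_num)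
    · apply ContinuousOn.add (by fun_prop)
      exact (continuousOn_const.mul (Real.continuous_arcsin.comp_continuousOn (by fun_prop)))
    · intro l hl
      apply HasDerivAt.hasDerivWithinAt
      have hq : 0 < Real.sqrt (4 - l^2) := Real.sqrt_pos.2 (by nlinarith [hl.1, hl.2])
      set q := Real.sqrt (4 - l^2) with hqdef
      have hq2 : q^2 = 4 - l^2 := Real.sq_sqrt (by nlinarith [hl.1, hl.2])
      have hsqrt : HasDerivAt (fun l : ℝ => Real.sqrt (4 - l^2)) (1 / (2 * q) * (-(2*l))) l := by
        have h1 : HasDerivAt (fun l : ℝ => 4 - l^2) (-(2*l)) l := by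
          simpa using ((hasDerivAt_pow 2 l).const_sub 4)
        exact (Real.hasDerivAt_sqrt (by nlinarith [hl.1, hl.2])).comp l h1
      have harc : HasDerivAt (fun l : ℝ => Real.arcsin (l/2))
          (1 / Real.sqrt (1 - (l/2)^2) * (1/2)) l := by
        have h2 : l/2 ≠ -1 := by intro h; have := hl.1; linarith [(by linarith : l = -2)]
        have h2' : l/2 ≠ 1 := by intro h; have := hl.2; linarith [(by linarith : l = 2)]
        exact (Real.hasDerivAt_arcsin h2 h2').comp l ((hasDerivAt_id l).div_const 2)
      have hrw2 : Real.sqrt (1 - (l/2)^2) = q/2 := by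
        rw [show (1 : ℝ) - (l/2)^2 = (q/2)^2 by rw [div_pow]; nlinarith [hq2],
          Real.sqrt_sq (by positivity)]
      have hA : HasDerivAt H
          ((1 * q + l * (1 / (2 * q) * (-(2*l))))/2 + 2 * (1 / Real.sqrt (1 - (l/2)^2) * (1/2))) l :=
        (((hasDerivAt_id l).mul hsqrt).div_const 2).add (harc.const_mul 2)
      refine hA.congr_deriv (Eq.symm ?_)
      rw [hrw2]
      field_simp
      linear_combination hq2
    · apply ContinuousOn.intervalIntegrable; fun_prop
  rw [key]
  norm_num [hH, Real.arcsin_one, Real.arcsin_neg]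
  ring

noncomputable def phiFun (y : ℝ) : ℝ := ∫ l in (-2:ℝ)..2, Real.log (y - l) * Real.sqrt (4 - l^2)

lemma D_hasDeriv {y : ℝ} (hy : 2 < y) :
    HasDerivAt (fun z => phiFun z - 2*π*rhsFun z) 0 y := by
  have h := (phi_hasDeriv hy).sub ((rhs_hasDeriv hy).const_mul (2*π))
  have : π * (y - Real.sqrt (y^2-4)) - 2*π*((y - Real.sqrt (y^2-4))/2) = 0 := by ring
  rw [this] at h
  exact h

lemma D_eq {a b : ℝ} (ha : 2 < a) (hb : 2 < b) :
    phiFun a - 2*π*rhsFun a = phiFun b - 2*π*rhsFun b := by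
  wlog hab : a ≤ b with H
  · exact (H hb ha (le_of_not_ge hab)).symm
  rcases eq_or_lt_of_le hab with rfl | hlt
  · rfl
  obtain ⟨c, hc, hc0⟩ := exists_hasDerivAt_eq_slope (fun z => phiFun z - 2*π*rhsFun z)
    (fun _ => 0) hlt
    (fun z hz => (D_hasDeriv (by exact lt_of_lt_of_le ha hz.1)).continuousAt.continuousWithinAt)
    (fun z hz => D_hasDeriv (by exact lt_trans ha hz.1))
  have hba : b - a ≠ 0 := by linarith
  have := hc0.symm
  rw [div_eq_zero_iff] at this
  rcases this with h | h
  · linarith [sub_eq_zero.1 h]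
  · exact absurd h hba

lemma phi_le {y : ℝ} (hy : 2 < y) : phiFun y ≤ 2*π*Real.log (y+2) := by
  have h : phiFun y ≤ ∫ l in (-2:ℝ)..2, Real.log (y+2) * Real.sqrt (4 - l^2) := by
    apply intervalIntegral.integral_mono_on (by norm_num)
    · apply ContinuousOn.intervalIntegrable
      apply ContinuousOn.mul _ (by fun_prop)
      apply ContinuousOn.log (by fun_prop)
      intro t ht
      rw [Set.uIcc_of_le (by norm_num : (-2:ℝ) ≤ 2)] at ht
      have := ht.2; intro hh; linarith [(by linarith : t = y)]
    · exact (continuousOn_const.mul (by fun_prop)).intervalIntegrable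
    · intro l hl
      apply mul_le_mul_of_nonneg_right _ (Real.sqrt_nonneg _)
      apply Real.log_le_log (by linarith [hl.2]) (by linarith [hl.1, hl.2])
  rwa [intervalIntegral.integral_const_mul, integral_sqrt_semi, mul_comm] at h

lemma phi_ge {y : ℝ} (hy : 2 < y) : 2*π*Real.log (y-2) ≤ phiFun y := by
  have h : (∫ l in (-2:ℝ)..2, Real.log (y-2) * Real.sqrt (4 - l^2)) ≤ phiFun y := by
    apply intervalIntegral.integral_mono_on (by norm_num)
    · exact (continuousOn_const.mul (by fun_prop)).intervalIntegrable
    · apply ContinuousOn.intervalIntegrable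
      apply ContinuousOn.mul _ (by fun_prop)
      apply ContinuousOn.log (by fun_prop)
      intro t ht
      rw [Set.uIcc_of_le (by norm_num : (-2:ℝ) ≤ 2)] at ht
      have := ht.2; intro hh; linarith [(by linarith : t = y)]
    · intro l hl
      apply mul_le_mul_of_nonneg_right _ (Real.sqrt_nonneg _)
      apply Real.log_le_log (by linarith) (by linarith [hl.2])
  rwa [intervalIntegral.integral_const_mul, integral_sqrt_semi, mul_comm] at h

lemma ratio_lim (a b : ℝ) : Filter.Tendsto (fun y : ℝ => (y+a)/(y+b)) Filter.atTop (nhds 1) := by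
  have h : Filter.Tendsto (fun y : ℝ => 1 + (a-b)/(y+b)) Filter.atTop (nhds 1) := by
    have := Filter.Tendsto.div_atTop (tendsto_const_nhds (x := a - b))
      (Filter.tendsto_atTop_add_const_right Filter.atTop b Filter.tendsto_id)
    simpa using tendsto_const_nhds.add this
  apply h.congr'
  filter_upwards [Filter.eventually_gt_atTop (max 0 (-b))] with y hy
  have hyb : 0 < y + b := by have := lt_of_le_of_lt (le_max_right 0 (-b)) hy; linarith
  field_simp
  ring

lemma r_lim (c : ℝ) :
    Filter.Tendsto (fun y : ℝ => 2*(y+c)/(y + Real.sqrt (y^2-4))) Filter.atTop (nhds 1) := by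
  apply tendsto_of_tendsto_of_tendsto_of_le_of_le' (ratio_lim c 0) (ratio_lim c (-1))
  · filter_upwards [Filter.eventually_gt_atTop (max 2 (-c))] with y hy
    have hy2 : 2 < y := lt_of_le_of_lt (le_max_left _ _) hy
    have hyc : 0 ≤ y + c := by have := lt_of_le_of_lt (le_max_right 2 (-c)) hy; linarith
    have h1 : 0 < y + Real.sqrt (y^2-4) := by linarith [s_pos hy2]
    rw [show y + 0 = y by ring, div_le_div_iff₀ (by linarith) h1]
    nlinarith [s_le hy2]
  · filter_upwards [Filter.eventually_gt_atTop (max 2 (-c))] with y hy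
    have hy2 : 2 < y := lt_of_le_of_lt (le_max_left _ _) hy
    have hyc : 0 ≤ y + c := by have := lt_of_le_of_lt (le_max_right 2 (-c)) hy; linarith
    have h1 : 0 < y + Real.sqrt (y^2-4) := by linarith [s_pos hy2]
    rw [show y + -1 = y - 1 by ring, div_le_div_iff₀ h1 (by linarith)]
    nlinarith [sub_le_s hy2]

lemma lim_c (c : ℝ) :
    Filter.Tendsto (fun y : ℝ => Real.log (y+c) - rhsFun y) Filter.atTop (nhds 0) := by
  have hA : Filter.Tendsto (fun y : ℝ => y^2/4 - 1/2 - (y/4)*Real.sqrt (y^2-4))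
      Filter.atTop (nhds 0) := by
    apply tendsto_of_tendsto_of_tendsto_of_le_of_le'
      (g := fun _ : ℝ => (0:ℝ)) (h := fun y : ℝ => 2/y^2) tendsto_const_nhds
    · exact Filter.Tendsto.div_atTop tendsto_const_nhds (Filter.tendsto_pow_atTop (by norm_num)
        |>.comp Filter.tendsto_id)
    · filter_upwards [Filter.eventually_gt_atTop (2:ℝ)] with y hy
      have h1 : 0 < y + Real.sqrt (y^2-4) := by linarith [s_pos hy]
      have key : y^2/4 - 1/2 - (y/4)*Real.sqrt (y^2-4) = 2/(y + Real.sqrt (y^2-4))^2 := by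
        rw [eq_div_iff (ne_of_gt (pow_pos h1 2))]
        linear_combination ((-(y^2) - 2 - y*Real.sqrt (y^2-4))/4) * (s_sq hy)
      rw [key]
      positivity
    · filter_upwards [Filter.eventually_gt_atTop (2:ℝ)] with y hy
      have h1 : 0 < y + Real.sqrt (y^2-4) := by linarith [s_pos hy]
      have key : y^2/4 - 1/2 - (y/4)*Real.sqrt (y^2-4) = 2/(y + Real.sqrt (y^2-4))^2 := by
        rw [eq_div_iff (ne_of_gt (pow_pos h1 2))]
        linear_combination ((-(y^2) - 2 - y*Real.sqrt (y^2-4))/4) * (s_sq hy)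
      rw [key]
      have hyy : y ≤ y + Real.sqrt (y^2-4) := by linarith [s_pos hy]
      gcongr

  have hB : Filter.Tendsto (fun y : ℝ => Real.log (y+c) - Real.log ((y + Real.sqrt (y^2-4))/2))
      Filter.atTop (nhds 0) := by
    have := (Real.continuousAt_log one_ne_zero).tendsto.comp (r_lim c)
    rw [Real.log_one] at this
    apply this.congr'
    filter_upwards [Filter.eventually_gt_atTop (max 2 (-c))] with y hy
    have hy2 : 2 < y := lt_of_le_of_lt (le_max_left _ _) hy
    have hyc : 0 < y + c := by have := lt_of_le_of_lt (le_max_right 2 (-c)) hy; linarith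
    have h1 : 0 < y + Real.sqrt (y^2-4) := by linarith [s_pos hy2]
    simp only [Function.comp]
    rw [show 2*(y+c)/(y + Real.sqrt (y^2-4)) = (y+c)/((y + Real.sqrt (y^2-4))/2) by
        rw [div_div_eq_mul_div]; ring_nf]
    rw [Real.log_div (by positivity) (by positivity)]
  have := hB.sub hA
  rw [sub_zero] at this
  apply this.congr'
  filter_upwards [Filter.eventually_gt_atTop (2:ℝ)] with y hy
  simp only [rhsFun]
  ring

lemma phi_eq {x : ℝ} (hx : 2 < x) : phiFun x = 2*π*rhsFun x := by
  set c := phiFun x - 2*π*rhsFun x with hc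
  have hcy : ∀ y : ℝ, 2 < y → c = phiFun y - 2*π*rhsFun y := fun y hy => D_eq hx hy
  have hle : c ≤ 0 := by
    apply ge_of_tendsto (f := fun y : ℝ => 2*π*(Real.log (y+2) - rhsFun y))
      (by simpa using (lim_c 2).const_mul (2*π))
    filter_upwards [Filter.eventually_gt_atTop (2:ℝ)] with y hy
    rw [hcy y hy, mul_sub]
    linarith [phi_le hy]
  have hge : 0 ≤ c := by
    apply le_of_tendsto (f := fun y : ℝ => 2*π*(Real.log (y+(-2)) - rhsFun y))
      (by simpa using (lim_c (-2)).const_mul (2*π))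
    filter_upwards [Filter.eventually_gt_atTop (2:ℝ)] with y hy
    rw [hcy y hy, mul_sub, show y + (-2) = y - 2 by ring]
    linarith [phi_ge hy]
  have : c = 0 := le_antisymm hle hge
  rw [hc] at this
  linarith [this]

/-- For `|x| > 2`, the log-potential of the semicircle law equals
`x²/4 - 1/2 - (|x|/4)√(x² - 4) + log((|x| + √(x² - 4))/2)`. -/
theorem logPotential_semicircle_of_two_lt_abs (x : ℝ) (hx : 2 < |x|) :
    ∫ l, Real.log |l - x| ∂semicircle =
      x ^ 2 / 4 - 1 / 2 - (|x| / 4) * Real.sqrt (x ^ 2 - 4)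
        + Real.log ((|x| + Real.sqrt (x ^ 2 - 4)) / 2) := by
  have hmeas : Measurable fun l : ℝ => ((1 / (2 * π)) * Real.sqrt (4 - l ^ 2)).toNNReal :=
    (measurable_const.mul (Real.continuous_sqrt.comp (by continuity)).measurable).real_toNNReal
  have h1 : ∫ l, Real.log |l - x| ∂semicircle
      = ∫ l, ((1 / (2 * π)) * Real.sqrt (4 - l ^ 2)) * Real.log |l - x| := by
    rw [show semicircle = volume.withDensity
        (fun l => ((fun l : ℝ => ((1 / (2 * π)) * Real.sqrt (4 - l ^ 2)).toNNReal) l : ℝ≥0∞))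
      from rfl]
    rw [integral_withDensity_eq_integral_smul hmeas]
    congr 1; ext l
    rw [NNReal.smul_def, Real.coe_toNNReal _ (by positivity), smul_eq_mul]
  rw [h1]
  rw [← MeasureTheory.setIntegral_eq_integral_of_forall_compl_eq_zero
      (s := Set.Ioc (-2:ℝ) 2) (by
        intro l hl
        simp only [Set.mem_Ioc, not_and_or, not_lt, not_le] at hl
        have : Real.sqrt (4 - l^2) = 0 := Real.sqrt_eq_zero'.2 (by rcases hl with h | h <;> nlinarith)
        rw [this]; ring)]
  rw [← intervalIntegral.integral_of_le (by norm_num : (-2:ℝ) ≤ 2)]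
  rw [show (fun l : ℝ => ((1 / (2 * π)) * Real.sqrt (4 - l ^ 2)) * Real.log |l - x|)
      = fun l : ℝ => (1/(2*π)) * (Real.log |l - x| * Real.sqrt (4 - l ^ 2)) by ext l; ring]
  rw [intervalIntegral.integral_const_mul]
  have hphi : ∀ y : ℝ, phiFun y = ∫ l in (-2:ℝ)..2, Real.log (l - y) * Real.sqrt (4 - l ^ 2) :=
    fun y => intervalIntegral.integral_congr fun l _ => by
      rw [show y - l = -(l - y) by ring, Real.log_neg_eq_log]
  have habs : (∫ l in (-2:ℝ)..2, Real.log |l - x| * Real.sqrt (4 - l ^ 2))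
      = ∫ l in (-2:ℝ)..2, Real.log (l - x) * Real.sqrt (4 - l ^ 2) :=
    intervalIntegral.integral_congr fun l _ => by rw [Real.log_abs]
  have key : (∫ l in (-2:ℝ)..2, Real.log |l - x| * Real.sqrt (4 - l ^ 2)) = phiFun |x| := by
    rw [habs, hphi]
    rcases le_or_gt 0 x with hx0 | hx0
    · rw [abs_of_nonneg hx0]
    · rw [abs_of_neg hx0]
      have hcn := intervalIntegral.integral_comp_neg
        (f := fun l : ℝ => Real.log (l - x) * Real.sqrt (4 - l ^ 2)) (a := (-2:ℝ)) (b := 2)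
      norm_num at hcn
      rw [← hcn]
      apply intervalIntegral.integral_congr
      intro l _
      dsimp only
      rw [show -l - x = -(l - -x) by ring, Real.log_neg_eq_log]
  rw [key, phi_eq hx]
  rw [show (1/(2*π)) * (2*π*rhsFun |x|) = rhsFun |x| by
    field_simp]
  simp only [rhsFun, sq_abs]
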